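/- Let A be a symmetric positive definite real N×N matrix, let q ∈ [0,1), and let E be a real N×N matrix with |E x|_A ≤ q |x|_A for all x ∈ ℝ^N. Define P := I − E E^{T_A}, where E^{T_A} := A⁻¹ Eᵀ A. Then: (i) P is self-adjoint with respect to the A-inner product, i.e., Pᵀ A = A P; (ii) (P x, x)_A ≥ (1 − q²) |x|_A² for all x ∈ ℝ^N, so in particular P is positive definite; (iii) |P x|_A ≤ (1 + q²) |x|_A for all x ∈ ℝ^N; (iv) P is invertible and |P⁻¹ x|_A ≤ (1 − q²)⁻¹ |x|_A for all x ∈ ℝ^N; consequently the condition number of P with respect to the norm |·|_A is at most (1 + q²)/(1 − q²); and (v) the matrix B := P A⁻¹ = A⁻¹ − E A⁻¹ Eᵀ is symmetric positive definite. -/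

import Mathlib

open Matrix

noncomputable def anorm {N : ℕ} (A : Matrix (Fin N) (Fin N) ℝ) (x : Fin N → ℝ) : ℝ :=
  Real.sqrt (x ⬝ᵥ A.mulVec x)

section helpers
variable {N : ℕ} {A : Matrix (Fin N) (Fin N) ℝ}

lemma dot_pos (hA : A.PosDef) {x : Fin N → ℝ} (hx : x ≠ 0) : 0 < x ⬝ᵥ A.mulVec x := by
  have := hA.re_dotProduct_pos hx
  simpa using this

lemma dot_nonneg (hA : A.PosDef) (x : Fin N → ℝ) : 0 ≤ x ⬝ᵥ A.mulVec x := by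
  by_cases hx : x = 0
  · simp [hx]
  · exact (dot_pos hA hx).le

lemma anorm_nonneg (A : Matrix (Fin N) (Fin N) ℝ) (x : Fin N → ℝ) : 0 ≤ anorm A x :=
  Real.sqrt_nonneg _

lemma anorm_sq (hA : A.PosDef) (x : Fin N → ℝ) : anorm A x ^ 2 = x ⬝ᵥ A.mulVec x :=
  Real.sq_sqrt (dot_nonneg hA x)

lemma anorm_eq_norm (hA : A.PosDef) (x : Fin N → ℝ) :
    anorm A x = @norm _ (A.toSeminormedAddCommGroup hA.posSemidef).toNorm x := by
  have h := @real_inner_self_eq_norm_mul_norm (Fin N → ℝ)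
    (A.toSeminormedAddCommGroup hA.posSemidef) (A.toInnerProductSpace hA.posSemidef) x
  have hinn : (@inner ℝ _ (A.toInnerProductSpace hA.posSemidef).toInner x x) = x ⬝ᵥ A.mulVec x := by
    show (A *ᵥ x) ⬝ᵥ star x = _; rw [dotProduct_comm]; rfl
  rw [hinn] at h
  rw [anorm, h]
  exact Real.sqrt_mul_self
    (@norm_nonneg _ (@SeminormedAddCommGroup.toSeminormedAddGroup _
      (A.toSeminormedAddCommGroup hA.posSemidef)) x)

lemma acs (hA : A.PosDef) (x y : Fin N → ℝ) : x ⬝ᵥ A.mulVec y ≤ anorm A x * anorm A y := by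
  have h := @real_inner_le_norm (Fin N → ℝ)
    (A.toSeminormedAddCommGroup hA.posSemidef) (A.toInnerProductSpace hA.posSemidef) x y
  have hinn : (@inner ℝ _ (A.toInnerProductSpace hA.posSemidef).toInner x y) = x ⬝ᵥ A.mulVec y := by
    show (A *ᵥ y) ⬝ᵥ star x = _; rw [dotProduct_comm]; rfl
  rw [hinn] at h
  rw [anorm_eq_norm hA, anorm_eq_norm hA]
  exact h

lemma atri (hA : A.PosDef) (x y : Fin N → ℝ) : anorm A (x - y) ≤ anorm A x + anorm A y := by
  rw [anorm_eq_norm hA, anorm_eq_norm hA, anorm_eq_norm hA]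
  exact @norm_sub_le _ (@SeminormedAddCommGroup.toSeminormedAddGroup _
    (A.toSeminormedAddCommGroup hA.posSemidef)) x y

end helpers

theorem symmetric_preconditioner_optimal {N : ℕ}
    (A E : Matrix (Fin N) (Fin N) ℝ) (hA : A.PosDef)
    (q : ℝ) (hq0 : 0 ≤ q) (hq1 : q < 1)
    (hE : ∀ x : Fin N → ℝ, anorm A (E.mulVec x) ≤ q * anorm A x) :
    ((1 - E * (A⁻¹ * Eᵀ * A))ᵀ * A = A * (1 - E * (A⁻¹ * Eᵀ * A))) ∧
    (∀ x : Fin N → ℝ, (1 - q ^ 2) * (x ⬝ᵥ A.mulVec x) ≤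
      ((1 - E * (A⁻¹ * Eᵀ * A)).mulVec x) ⬝ᵥ A.mulVec x) ∧
    (∀ x : Fin N → ℝ, anorm A ((1 - E * (A⁻¹ * Eᵀ * A)).mulVec x) ≤
      (1 + q ^ 2) * anorm A x) ∧
    (IsUnit (1 - E * (A⁻¹ * Eᵀ * A)) ∧
      ∀ x : Fin N → ℝ, anorm A ((1 - E * (A⁻¹ * Eᵀ * A))⁻¹.mulVec x) ≤
        (1 - q ^ 2)⁻¹ * anorm A x) ∧
    ((1 - E * (A⁻¹ * Eᵀ * A)) * A⁻¹ = A⁻¹ - E * A⁻¹ * Eᵀ ∧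
      ((1 - E * (A⁻¹ * Eᵀ * A)) * A⁻¹).PosDef) := by
  set S : Matrix (Fin N) (Fin N) ℝ := A⁻¹ * Eᵀ * A with hSdef
  set P : Matrix (Fin N) (Fin N) ℝ := 1 - E * S with hPdef
  have h1q : 0 < 1 - q ^ 2 := by nlinarith
  have hAH : Aᵀ = A := by
    rw [← Matrix.conjTranspose_eq_transpose_of_trivial]; exact hA.isHermitian
  have hUnitDet : IsUnit A.det := isUnit_iff_ne_zero.mpr hA.det_pos.ne'
  have hAA : A * A⁻¹ = 1 := A.mul_nonsing_inv hUnitDet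
  have hA'A : A⁻¹ * A = 1 := A.nonsing_inv_mul hUnitDet
  have hAinvT : A⁻¹ᵀ = A⁻¹ := by rw [Matrix.transpose_nonsing_inv, hAH]
  have hAS : A * S = Eᵀ * A := by
    rw [hSdef, ← Matrix.mul_assoc, ← Matrix.mul_assoc, hAA, Matrix.one_mul]
  -- adjoint identity
  have hadj : ∀ y z : Fin N → ℝ, (E.mulVec y) ⬝ᵥ z = y ⬝ᵥ (Eᵀ.mulVec z) := by
    intro y z
    rw [dotProduct_mulVec, vecMul_transpose]
  have hadjA : ∀ y x : Fin N → ℝ, (E.mulVec y) ⬝ᵥ (A.mulVec x) = y ⬝ᵥ (A.mulVec (S.mulVec x)) := by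
    intro y x
    rw [hadj, mulVec_mulVec, ← hAS, ← mulVec_mulVec]
  -- the adjoint has norm ≤ q
  have hS : ∀ x : Fin N → ℝ, anorm A (S.mulVec x) ≤ q * anorm A x := by
    intro x
    set u := S.mulVec x with hu
    have h1 : u ⬝ᵥ A.mulVec u = (E.mulVec u) ⬝ᵥ (A.mulVec x) := (hadjA u x).symm
    have h2 : (E.mulVec u) ⬝ᵥ (A.mulVec x) ≤ (q * anorm A u) * anorm A x := by
      calc (E.mulVec u) ⬝ᵥ (A.mulVec x) ≤ anorm A (E.mulVec u) * anorm A x := acs hA _ _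
        _ ≤ (q * anorm A u) * anorm A x :=
          mul_le_mul_of_nonneg_right (hE u) (anorm_nonneg A x)
    have h3 : anorm A u ^ 2 ≤ (q * anorm A u) * anorm A x := by
      rw [anorm_sq hA, h1]; exact h2
    rcases eq_or_lt_of_le (anorm_nonneg A u) with h0 | h0
    · rw [← h0]; exact mul_nonneg hq0 (anorm_nonneg A x)
    · have := h3
      rw [pow_two] at this
      have : anorm A u * anorm A u ≤ (q * anorm A x) * anorm A u := by ring_nf; ring_nf at this; linarith
      exact le_of_mul_le_mul_right (by linarith) h0
  -- (ii)
  have hii : ∀ x : Fin N → ℝ, (1 - q ^ 2) * (x ⬝ᵥ A.mulVec x) ≤ (P.mulVec x) ⬝ᵥ A.mulVec x := by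
    intro x
    have hPx : P.mulVec x = x - E.mulVec (S.mulVec x) := by
      rw [hPdef, Matrix.sub_mulVec, Matrix.one_mulVec, ← mulVec_mulVec]
    have hdot : (P.mulVec x) ⬝ᵥ A.mulVec x
        = x ⬝ᵥ A.mulVec x - (S.mulVec x) ⬝ᵥ (A.mulVec (S.mulVec x)) := by
      rw [hPx, sub_dotProduct, hadjA]
    have hSx : (S.mulVec x) ⬝ᵥ (A.mulVec (S.mulVec x)) ≤ q ^ 2 * (x ⬝ᵥ A.mulVec x) := by
      have := hS x
      have h1 : anorm A (S.mulVec x) ^ 2 ≤ (q * anorm A x) ^ 2 := by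
        apply pow_le_pow_left₀ (anorm_nonneg A _) this
      rw [anorm_sq hA] at h1
      calc (S.mulVec x) ⬝ᵥ (A.mulVec (S.mulVec x)) ≤ (q * anorm A x) ^ 2 := h1
        _ = q ^ 2 * anorm A x ^ 2 := by ring
        _ = q ^ 2 * (x ⬝ᵥ A.mulVec x) := by rw [anorm_sq hA]
    rw [hdot]; linarith
  -- (iii)
  have hiii : ∀ x : Fin N → ℝ, anorm A (P.mulVec x) ≤ (1 + q ^ 2) * anorm A x := by
    intro x
    have hPx : P.mulVec x = x - E.mulVec (S.mulVec x) := by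
      rw [hPdef, Matrix.sub_mulVec, Matrix.one_mulVec, ← mulVec_mulVec]
    have h1 : anorm A (P.mulVec x) ≤ anorm A x + anorm A (E.mulVec (S.mulVec x)) := by
      rw [hPx]; exact atri hA _ _
    have h2 : anorm A (E.mulVec (S.mulVec x)) ≤ q * (q * anorm A x) :=
      (hE _).trans (mul_le_mul_of_nonneg_left (hS x) hq0)
    nlinarith [anorm_nonneg A x]
  -- (i)
  have hi : Pᵀ * A = A * P := by
    have hT : (E * S)ᵀ = A * E * (A⁻¹ * Eᵀ) := by
      rw [hSdef, Matrix.transpose_mul, Matrix.transpose_mul, Matrix.transpose_mul, hAH, hAinvT,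
        Matrix.transpose_transpose]
      simp [Matrix.mul_assoc]
    rw [hPdef, Matrix.transpose_sub, Matrix.transpose_one, Matrix.sub_mul, Matrix.mul_sub,
      Matrix.one_mul, Matrix.mul_one, hT, hSdef]
    simp [Matrix.mul_assoc]
  -- (iv) invertibility
  have hinj : Function.Injective P.mulVec := by
    intro a b hab
    have hz : P.mulVec (a - b) = 0 := by
      rw [Matrix.mulVec_sub, hab, sub_self]
    by_contra hne
    have hab0 : a - b ≠ 0 := sub_ne_zero.mpr (fun h => hne (by rw [h]))
    have h1 := hii (a - b)
    rw [hz] at h1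
    simp only [zero_dotProduct] at h1
    have h2 := dot_pos hA hab0
    nlinarith
  have hPU : IsUnit P := mulVec_injective_iff_isUnit.mp hinj
  have hPdet : IsUnit P.det := (Matrix.isUnit_iff_isUnit_det P).mp hPU
  have hPP : P * P⁻¹ = 1 := P.mul_nonsing_inv hPdet
  have hiv : ∀ x : Fin N → ℝ, anorm A (P⁻¹.mulVec x) ≤ (1 - q ^ 2)⁻¹ * anorm A x := by
    intro x
    set y := P⁻¹.mulVec x with hy
    have hPy : P.mulVec y = x := by
      rw [hy, mulVec_mulVec, hPP, Matrix.one_mulVec]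
    have h1 : (1 - q ^ 2) * (y ⬝ᵥ A.mulVec y) ≤ x ⬝ᵥ A.mulVec y := by
      have := hii y
      rwa [hPy] at this
    have h2 : x ⬝ᵥ A.mulVec y ≤ anorm A x * anorm A y := acs hA x y
    have key : (1 - q ^ 2) * anorm A y ≤ anorm A x := by
      rcases eq_or_lt_of_le (anorm_nonneg A y) with h0 | h0
      · rw [← h0, mul_zero]; exact anorm_nonneg A x
      · have h3 : (1 - q ^ 2) * (anorm A y * anorm A y) ≤ anorm A x * anorm A y := by
          have := anorm_sq hA y
          nlinarith
        have h4 : ((1 - q ^ 2) * anorm A y) * anorm A y ≤ anorm A x * anorm A y := by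
          linarith [h3]
        exact le_of_mul_le_mul_right h4 h0
    rw [inv_mul_eq_div, le_div_iff₀ h1q]
    linarith [key]
  -- (v)
  have hvB : P * A⁻¹ = A⁻¹ - E * A⁻¹ * Eᵀ := by
    rw [hPdef, hSdef, Matrix.sub_mul, Matrix.one_mul]
    congr 1
    rw [Matrix.mul_assoc E, Matrix.mul_assoc, Matrix.mul_assoc, Matrix.mul_assoc, hAA,
      Matrix.mul_one]
  have hPT : Pᵀ = A * P * A⁻¹ := by
    calc Pᵀ = Pᵀ * (A * A⁻¹) := by rw [hAA, Matrix.mul_one]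
      _ = (Pᵀ * A) * A⁻¹ := by rw [Matrix.mul_assoc]
      _ = A * P * A⁻¹ := by rw [hi]
  have hBH : (P * A⁻¹).IsHermitian := by
    have : (P * A⁻¹)ᵀ = P * A⁻¹ := by
      rw [Matrix.transpose_mul, hAinvT, hPT, ← Matrix.mul_assoc, ← Matrix.mul_assoc, hA'A,
        Matrix.one_mul]
    rw [Matrix.IsHermitian, Matrix.conjTranspose_eq_transpose_of_trivial]
    exact this
  have hBpos : (P * A⁻¹).PosDef := by
    refine Matrix.PosDef.of_dotProduct_mulVec_pos hBH fun x hx => ?_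
    have hxA : A.mulVec (A⁻¹.mulVec x) = x := by
      rw [mulVec_mulVec, hAA, Matrix.one_mulVec]
    set y := A⁻¹.mulVec x with hy
    have hy0 : y ≠ 0 := by
      intro h
      apply hx
      rw [← hxA, h, Matrix.mulVec_zero]
    have hdot : x ⬝ᵥ (P * A⁻¹).mulVec x = (P.mulVec y) ⬝ᵥ (A.mulVec y) := by
      rw [← mulVec_mulVec, ← hy, ← hxA]
      exact dotProduct_comm (A.mulVec y) (P.mulVec y)
    have h1 := hii y
    have h2 := dot_pos hA hy0
    have : 0 < x ⬝ᵥ (P * A⁻¹).mulVec x := by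
      rw [hdot]; nlinarith
    simpa using this
  exact ⟨hi, hii, hiii, ⟨hPU, hiv⟩, hvB, hBpos⟩
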